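/- Let A be a commutative ring, I an ideal of A, and let (N_n)_{n≥0} be a descending chain of submodules of an A-module (N_{n+1} ⊆ N_n for all n) satisfying I·N_n ⊆ N_{n+1} for all n. Suppose there exists h ≥ 0 such that N_n = I·N_{n-1} + N_{n+1} for all n ≥ h+1, and suppose there exists r₀ such that N_r = I·N_{r-1} for all r ≥ r₀. Then N_n = I·N_{n-1} for all n ≥ h+1; consequently N_n = I^{n-h}·N_h for all n ≥ h. -/
import Mathlib


universe u

/-- The key lattice-theoretic step in the proof of Theorem 1.8 (strong syzygetic
Artin–Rees): if `(Nₙ)` is a descending chain of submodules with `I·Nₙ ⊆ Nₙ₊₁`,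
if `Nₙ = I·Nₙ₋₁ + Nₙ₊₁` for all `n ≥ h+1`, and if `Nᵣ = I·Nᵣ₋₁` for all large `r`,
then `Nₙ = I·Nₙ₋₁` for all `n ≥ h+1`, and consequently `Nₙ = I^{n-h}·N_h` for `n ≥ h`. -/
theorem submodule_chain_stabilizes
    (A : Type u) [CommRing A] (W : Type u) [AddCommGroup W] [Module A W]
    (I : Ideal A) (N : ℕ → Submodule A W)
    (hdesc : ∀ n : ℕ, N (n + 1) ≤ N n)
    (hIN : ∀ n : ℕ, I • N n ≤ N (n + 1))
    (h : ℕ)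
    (hmid : ∀ n : ℕ, h + 1 ≤ n → N n = I • N (n - 1) ⊔ N (n + 1))
    (hstab : ∃ r₀ : ℕ, ∀ r : ℕ, r₀ ≤ r → N r = I • N (r - 1)) :
    (∀ n : ℕ, h + 1 ≤ n → N n = I • N (n - 1)) ∧
      (∀ n : ℕ, h ≤ n → N n = I ^ (n - h) • N h) := by
  obtain ⟨r₀, hr₀⟩ := hstab
  have key : ∀ k n : ℕ, h + 1 ≤ n → r₀ ≤ n + k → N n = I • N (n - 1) := by
    intro k
    induction k with
    | zero => intro n hn hr; exact hr₀ n (by omega)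
    | succ k ih =>
      intro n hn hr
      by_cases hc : r₀ ≤ n
      · exact hr₀ n hc
      · have h1 : N (n + 1) = I • N n := by
          simpa using ih (n + 1) (by omega) (by omega)
        have hd : N n ≤ N (n - 1) := by
          have := hdesc (n - 1)
          rwa [Nat.sub_add_cancel (by omega)] at this
        have h2 : N (n + 1) ≤ I • N (n - 1) := by
          rw [h1]; exact Submodule.smul_mono le_rfl hd
        rw [hmid n hn]
        exact sup_eq_left.mpr h2
  have part1 : ∀ n, h + 1 ≤ n → N n = I • N (n - 1) :=
    fun n hn => key r₀ n hn (Nat.le_add_left _ _)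
  refine ⟨part1, ?_⟩
  intro n hn
  induction n, hn using Nat.le_induction with
  | base => simp
  | succ n hn ih =>
    have e : n + 1 - h = (n - h) + 1 := by omega
    rw [part1 (n + 1) (by omega), Nat.add_sub_cancel, ih, e, pow_succ',
      mul_smul]
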